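/- Let α ≥ 1, z ≥ 0, y ∈ [0,1], and define f(z,y,r) = 1 - r^α · e^{-z·max{r/α - y, 0}} for r ∈ [0,1]. Then the minimum of f(z,y,·) over r ∈ [0,1] is attained at r* given by: r* = min{α²/z, 1} if y < min{α/z, 1/α}; r* = αy if α/z ≤ y < 1/α; and r* = 1 if y ≥ 1/α. -/

import Mathlib

open Real

lemma phi_hasDeriv (α z : ℝ) (hα : 1 ≤ α) (r : ℝ) :
    HasDerivAt (fun s : ℝ => s ^ α * Real.exp (-(z/α) * s))
      (Real.exp (-(z/α) * r) * (α * r ^ (α-1) + (-(z/α)) * r ^ α)) r := by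
  have h1 : HasDerivAt (fun x : ℝ => x ^ α) (α * r ^ (α-1)) r :=
    Real.hasDerivAt_rpow_const (Or.inr hα)
  have h2 : HasDerivAt (fun x : ℝ => -(z/α) * x) (-(z/α)) r := by
    simpa using (hasDerivAt_id r).const_mul (-(z/α))
  have h3 := h2.exp
  have h4 := h1.mul h3
  refine h4.congr_deriv ?_
  ring

lemma phi_monoOn (α z : ℝ) (hα : 1 ≤ α) (hz : 0 < z) :
    MonotoneOn (fun s : ℝ => s ^ α * Real.exp (-(z/α) * s)) (Set.Icc 0 (α^2/z)) := by
  have hα0 : (0:ℝ) < α := lt_of_lt_of_le zero_lt_one hα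
  have hdiff : Differentiable ℝ (fun s : ℝ => s ^ α * Real.exp (-(z/α) * s)) :=
    fun r => (phi_hasDeriv α z hα r).differentiableAt
  apply monotoneOn_of_deriv_nonneg (convex_Icc _ _) hdiff.continuous.continuousOn
    hdiff.differentiableOn
  intro x hx
  rw [interior_Icc] at hx
  rw [(phi_hasDeriv α z hα x).deriv]
  have hx0 : 0 < x := hx.1
  have hxα : x ^ α = x ^ (α-1) * x := by
    rw [← Real.rpow_add_one hx0.ne' (α-1)]; norm_num
  have hb : (z/α) * x ≤ α := by
    have h1 : (z/α) * x ≤ (z/α) * (α^2/z) :=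
      mul_le_mul_of_nonneg_left hx.2.le (div_nonneg hz.le hα0.le)
    have h2 : (z/α) * (α^2/z) = α := by field_simp
    linarith
  have ha : (0:ℝ) ≤ x ^ (α-1) := Real.rpow_nonneg hx0.le _
  have key : 0 ≤ α * x ^ (α-1) + (-(z/α)) * x ^ α := by
    rw [hxα]
    nlinarith [mul_nonneg ha (sub_nonneg.2 hb)]
  exact mul_nonneg (Real.exp_pos _).le key

lemma phi_antiOn (α z : ℝ) (hα : 1 ≤ α) (hz : 0 < z) :
    AntitoneOn (fun s : ℝ => s ^ α * Real.exp (-(z/α) * s)) (Set.Ici (α^2/z)) := by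
  have hα0 : (0:ℝ) < α := lt_of_lt_of_le zero_lt_one hα
  have hdiff : Differentiable ℝ (fun s : ℝ => s ^ α * Real.exp (-(z/α) * s)) :=
    fun r => (phi_hasDeriv α z hα r).differentiableAt
  apply antitoneOn_of_deriv_nonpos (convex_Ici _) hdiff.continuous.continuousOn
    hdiff.differentiableOn
  intro x hx
  rw [interior_Ici] at hx
  rw [(phi_hasDeriv α z hα x).deriv]
  have hx0 : 0 < x := lt_of_le_of_lt (by positivity) hx
  have hxα : x ^ α = x ^ (α-1) * x := by
    rw [← Real.rpow_add_one hx0.ne' (α-1)]; norm_num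
  have hb : α ≤ (z/α) * x := by
    have h1 : (z/α) * (α^2/z) ≤ (z/α) * x :=
      mul_le_mul_of_nonneg_left hx.le (div_nonneg hz.le hα0.le)
    have h2 : (z/α) * (α^2/z) = α := by field_simp
    linarith
  have ha : (0:ℝ) ≤ x ^ (α-1) := Real.rpow_nonneg hx0.le _
  have key : α * x ^ (α-1) + (-(z/α)) * x ^ α ≤ 0 := by
    rw [hxα]
    nlinarith [mul_nonneg ha (sub_nonneg.2 hb)]
  exact mul_nonpos_of_nonneg_of_nonpos (Real.exp_pos _).le key

theorem min_of_f_attained (α : ℝ) (hα : 1 ≤ α) (z : ℝ) (hz : 0 ≤ z)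
    (y : ℝ) (hy : y ∈ Set.Icc (0:ℝ) 1)
    (f : ℝ → ℝ) (hf : ∀ r, f r = 1 - r ^ α * Real.exp (-z * max (r / α - y) 0))
    (rstar : ℝ)
    (hrstar : rstar = if z = 0 then 1
      else if y < min (α / z) (1 / α) then min (α ^ 2 / z) 1
      else if y < 1 / α then α * y
      else 1) :
    rstar ∈ Set.Icc (0:ℝ) 1 ∧ ∀ r ∈ Set.Icc (0:ℝ) 1, f rstar ≤ f r := by
  have hα0 : (0:ℝ) < α := lt_of_lt_of_le zero_lt_one hα
  obtain ⟨hy0, hy1'⟩ := hy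
  set G : ℝ → ℝ := fun s => s ^ α * Real.exp (-z * max (s / α - y) 0) with hG
  have hmain : rstar ∈ Set.Icc (0:ℝ) 1 ∧ ∀ r ∈ Set.Icc (0:ℝ) 1, G r ≤ G rstar := by
    have hGlow : ∀ s : ℝ, s / α ≤ y → G s = s ^ α := by
      intro s hs
      have : max (s / α - y) 0 = 0 := max_eq_right (by linarith)
      simp [hG, this]
    have hGhigh : ∀ s : ℝ, y ≤ s / α →
        G s = Real.exp (z*y) * (s ^ α * Real.exp (-(z/α) * s)) := by
      intro s hs
      have h1 : max (s / α - y) 0 = s / α - y := max_eq_left (by linarith)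
      have h2 : -z * (s / α - y) = z*y + (-(z/α)) * s := by field_simp; ring
      rw [hG]
      simp only [h1, h2, Real.exp_add]
      ring
    have hGαy : G (α * y) = (α * y) ^ α := by
      apply hGlow
      rw [mul_comm, mul_div_assoc, div_self hα0.ne', mul_one]
    have hyαy : y ≤ (α * y) / α := by
      rw [mul_comm, mul_div_assoc, div_self hα0.ne', mul_one]
    by_cases hz0 : z = 0
    · rw [hrstar, if_pos hz0]
      refine ⟨⟨zero_le_one, le_refl 1⟩, ?_⟩
      intro r hr
      have h1 : G 1 = 1 := by simp [hG, hz0]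
      have h2 : G r = r ^ α := by simp [hG, hz0]
      rw [h1, h2]
      exact Real.rpow_le_one hr.1 hr.2 hα0.le
    · have hzpos : 0 < z := lt_of_le_of_ne hz (Ne.symm hz0)
      by_cases hy1 : y < min (α / z) (1 / α)
      · -- rstar = min (α^2/z) 1
        rw [hrstar, if_neg hz0, if_pos hy1]
        obtain ⟨hyaz, hyα⟩ := lt_min_iff.mp hy1
        have hA0 : 0 < α^2/z := by positivity
        have hαyA : α * y ≤ α^2/z := by
          have := mul_le_mul_of_nonneg_left hyaz.le hα0.le
          have h2 : α * (α/z) = α^2/z := by ring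
          linarith
        have hαy1 : α * y ≤ 1 := by
          have := mul_lt_mul_of_pos_left hyα hα0
          rw [mul_one_div, div_self hα0.ne'] at this
          linarith
        set R := min (α^2/z) 1 with hR
        have hR0 : 0 ≤ R := le_min hA0.le zero_le_one
        have hR1 : R ≤ 1 := min_le_right _ _
        have hRA : R ≤ α^2/z := min_le_left _ _
        have hαyR : α * y ≤ R := le_min hαyA hαy1
        have hyR : y ≤ R / α := by
          rw [le_div_iff₀ hα0]
          linarith [hαyR, mul_comm y α]
        have hGR : G R = Real.exp (z*y) * (R ^ α * Real.exp (-(z/α) * R)) := hGhigh R hyR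
        refine ⟨⟨hR0, hR1⟩, ?_⟩
        intro r hr
        rcases le_total r (α * y) with hc | hc
        · have hrα : r / α ≤ y := by
            rw [div_le_iff₀ hα0]
            linarith [mul_comm y α]
          rw [hGlow r hrα, hGR]
          have step1 : r ^ α ≤ (α*y) ^ α := Real.rpow_le_rpow hr.1 hc hα0.le
          have step2 : (α*y) ^ α = Real.exp (z*y) * ((α*y) ^ α * Real.exp (-(z/α) * (α*y))) := by
            rw [← hGhigh (α*y) hyαy, hGαy]
          have step3 : (α*y) ^ α * Real.exp (-(z/α) * (α*y)) ≤ R ^ α * Real.exp (-(z/α) * R) :=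
            phi_monoOn α z hα hzpos ⟨by positivity, hαyA⟩ ⟨hR0, hRA⟩ hαyR
          calc r ^ α ≤ (α*y) ^ α := step1
            _ = Real.exp (z*y) * ((α*y) ^ α * Real.exp (-(z/α) * (α*y))) := step2
            _ ≤ Real.exp (z*y) * (R ^ α * Real.exp (-(z/α) * R)) :=
                mul_le_mul_of_nonneg_left step3 (Real.exp_pos _).le
        · have hyr : y ≤ r / α := by
            rw [le_div_iff₀ hα0]
            linarith [mul_comm y α]
          rw [hGhigh r hyr, hGR]
          rcases le_total r R with hc2 | hc2
          · have step : r ^ α * Real.exp (-(z/α) * r) ≤ R ^ α * Real.exp (-(z/α) * R) :=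
              phi_monoOn α z hα hzpos ⟨hr.1, le_trans hc2 hRA⟩ ⟨hR0, hRA⟩ hc2
            exact mul_le_mul_of_nonneg_left step (Real.exp_pos _).le
          · rcases le_total (α^2/z) 1 with hc3 | hc3
            · have hReq : R = α^2/z := min_eq_left hc3
              have step : r ^ α * Real.exp (-(z/α) * r) ≤ R ^ α * Real.exp (-(z/α) * R) :=
                phi_antiOn α z hα hzpos (by rw [hReq]; exact Set.self_mem_Ici) (by rw [← hReq]; exact le_trans (le_refl R) hc2) hc2
              exact mul_le_mul_of_nonneg_left step (Real.exp_pos _).le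
            · have hReq : R = 1 := min_eq_right hc3
              have : r = R := le_antisymm (hReq ▸ hr.2) hc2
              rw [this]
      · by_cases hy2 : y < 1 / α
        · -- rstar = α * y, with α/z ≤ y
          rw [hrstar, if_neg hz0, if_neg hy1, if_pos hy2]
          have hyaz : α / z ≤ y := by
            rcases min_le_iff.mp (le_of_not_gt hy1) with h | h
            · exact h
            · linarith
          have hAαy : α^2/z ≤ α * y := by
            have := mul_le_mul_of_nonneg_left hyaz hα0.le
            have h2 : α * (α/z) = α^2/z := by ring
            linarith
          have hαy1 : α * y ≤ 1 := by
            have := mul_lt_mul_of_pos_left hy2 hα0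
            rw [mul_one_div, div_self hα0.ne'] at this
            linarith
          refine ⟨⟨by positivity, hαy1⟩, ?_⟩
          intro r hr
          rw [hGαy]
          rcases le_total r (α * y) with hc | hc
          · have hrα : r / α ≤ y := by
              rw [div_le_iff₀ hα0]
              linarith [mul_comm y α]
            rw [hGlow r hrα]
            exact Real.rpow_le_rpow hr.1 hc hα0.le
          · have hyr : y ≤ r / α := by
              rw [le_div_iff₀ hα0]
              linarith [mul_comm y α]
            rw [hGhigh r hyr]
            have step2 : (α*y) ^ α = Real.exp (z*y) * ((α*y) ^ α * Real.exp (-(z/α) * (α*y))) := by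
              rw [← hGhigh (α*y) hyαy, hGαy]
            have step : r ^ α * Real.exp (-(z/α) * r) ≤ (α*y) ^ α * Real.exp (-(z/α) * (α*y)) :=
              phi_antiOn α z hα hzpos hAαy (le_trans hAαy hc) hc
            rw [step2]
            exact mul_le_mul_of_nonneg_left step (Real.exp_pos _).le
        · -- rstar = 1, y ≥ 1/α
          rw [hrstar, if_neg hz0, if_neg hy1, if_neg hy2]
          have hyα : 1 / α ≤ y := le_of_not_gt hy2
          refine ⟨⟨zero_le_one, le_refl 1⟩, ?_⟩
          intro r hr
          have hG1 : G 1 = 1 := by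
            have h1 : (1:ℝ) / α ≤ y := hyα
            rw [hGlow 1 h1, Real.one_rpow]
          rw [hG1]
          have h2 : G r ≤ r ^ α := by
            have hexp : Real.exp (-z * max (r / α - y) 0) ≤ 1 := by
              rw [Real.exp_le_one_iff]
              have : 0 ≤ max (r / α - y) 0 := le_max_right _ _
              nlinarith
            calc G r = r ^ α * Real.exp (-z * max (r / α - y) 0) := rfl
              _ ≤ r ^ α * 1 := mul_le_mul_of_nonneg_left hexp (Real.rpow_nonneg hr.1 _)
              _ = r ^ α := mul_one _
          exact le_trans h2 (Real.rpow_le_one hr.1 hr.2 hα0.le)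
  refine ⟨hmain.1, ?_⟩
  intro r hr
  rw [hf, hf]
  exact sub_le_sub_left (hmain.2 r hr) 1
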